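/- Let W ≥ 2, L ∈ ℕ, K ≥ 0, B > 0, and let x_1,…,x_n ∈ [−B,B]^d. Let S := {(φ(x_1),…,φ(x_n)) : φ ∈ SNN_{d,1}(W,L,K)} ⊆ ℝ^n. Then R_n(S) ≥ (K/(2√2·n)) · max_{1≤j≤d+1} √(Σ_{i=1}^n x_{i,j}²) ≥ K/(2√(2n)), where x_{i,j} denotes the j-th coordinate of the augmented vector x̃_i = (x_iᵀ,1)ᵀ ∈ ℝ^{d+1}. -/

import Mathlib

open Finset
open scoped BigOperators

/-- Rademacher complexity of a set `S ⊆ ℝ^n`: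
`R_n(S) = E_ξ [ sup_{s ∈ S} (1/n) ∑ᵢ ξᵢ sᵢ ]` for i.i.d. uniform signs `ξᵢ ∈ {±1}`. -/
noncomputable def radComplexity {n : ℕ} (S : Set (Fin n → ℝ)) : ℝ :=
  (∑ ξ : Fin n → Bool,
      sSup ((fun s => (n : ℝ)⁻¹ * ∑ i, (if ξ i then (1 : ℝ) else -1) * s i) '' S)) / 2 ^ n
/-- ReLU activation. -/
noncomputable def relu (x : ℝ) : ℝ := max x 0

/-- Parameters of a bias-free ReLU network acting on the augmented input `x̃ = (x, 1)`,
with scalar output.  This parameterizes the class `SNN_{d,1}`. -/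
structure SNNP (d : ℕ) where
  depth : ℕ
  width : ℕ → ℕ
  width_in : width 0 = d + 1
  width_out : width (depth + 1) = 1
  A : (ℓ : ℕ) → Matrix (Fin (width (ℓ + 1))) (Fin (width ℓ)) ℝ

namespace SNNP

variable {d : ℕ}

/-- Hidden layers: `h₀ = x̃` and `h_{ℓ+1} = σ(Ã_ℓ h_ℓ)`. -/
noncomputable def layer (φ : SNNP d) (x : Fin d → ℝ) : (ℓ : ℕ) → Fin (φ.width ℓ) → ℝ
  | 0 => fun i => (Fin.snoc x 1 : Fin (d + 1) → ℝ) (Fin.cast φ.width_in i)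
  | ℓ + 1 => fun i => relu ((φ.A ℓ).mulVec (layer φ x ℓ) i)

/-- Output of the network: `Ã_L h_L` (no ReLU on the output). -/
noncomputable def eval (φ : SNNP d) (x : Fin d → ℝ) : ℝ :=
  (φ.A φ.depth).mulVec (φ.layer x φ.depth) (Fin.cast φ.width_out.symm 0)

end SNNP

/-- Operator norm `‖A‖ = sup_{‖x‖_∞ ≤ 1} ‖Ax‖_∞`: the maximum ℓ¹-norm of the rows. -/
noncomputable def matOpNorm {m n : ℕ} (A : Matrix (Fin m) (Fin n) ℝ) : ℝ :=
  ⨆ i, ∑ j, |A i j|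

/-- The norm-constrained class `SNN_{d,1}(W, L, K)`: networks of the form
`φ(x) = Ã_L σ(Ã_{L-1} σ(⋯ σ(Ã_0 x̃)))` with max hidden width ≤ `W`, depth `L` and
`∏_{ℓ=0}^{L} ‖Ã_ℓ‖ ≤ K`. -/
noncomputable def SNNSet (d W L : ℕ) (K : ℝ) : Set ((Fin d → ℝ) → ℝ) :=
  {f | ∃ φ : SNNP d, φ.depth = L ∧ (∀ ℓ, 1 ≤ ℓ → ℓ ≤ L → φ.width ℓ ≤ W) ∧
      (∏ ℓ ∈ Finset.range (L + 1), matOpNorm (φ.A ℓ)) ≤ K ∧ f = φ.eval}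

noncomputable def lnet (d L : ℕ) (j : Fin (d + 1)) (c : ℝ) (ι : Bool) : SNNP d where
  depth := L
  width := fun ℓ => match ℓ with | 0 => d + 1 | _ + 1 => 1
  width_in := rfl
  width_out := rfl
  A := fun ℓ => match ℓ with
    | 0 => Matrix.of fun (_ : Fin 1) (k : Fin (d + 1)) =>
        if k = j then (if ι then (1:ℝ) else -1) else 0
    | ℓ' + 1 => Matrix.of fun (_ : Fin 1) (_ : Fin 1) =>
        if ℓ' + 1 = L then c else 1

lemma lnet_layer (d L : ℕ) (j : Fin (d + 1)) (c : ℝ) (ι : Bool) (x : Fin d → ℝ) :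
    ∀ ℓ, ℓ + 1 ≤ L → ∀ i,
      (lnet d L j c ι).layer x (ℓ + 1) i
        = relu ((if ι then (1:ℝ) else -1) * (Fin.snoc x 1 : Fin (d + 1) → ℝ) j) := by
  intro ℓ
  induction ℓ with
  | zero =>
    intro hl i
    show relu (((lnet d L j c ι).A 0).mulVec ((lnet d L j c ι).layer x 0) i) = _
    congr 1
    show (∑ k : Fin (d+1), (if k = j then (if ι then (1:ℝ) else -1) else 0) *
        (lnet d L j c ι).layer x 0 k) = _
    have hl0 : ∀ k : Fin (d + 1), (lnet d L j c ι).layer x 0 k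
        = (Fin.snoc x 1 : Fin (d + 1) → ℝ) k := by
      intro k
      show (Fin.snoc x 1 : Fin (d + 1) → ℝ) (Fin.cast _ k) = _
      congr 1
    simp only [hl0, ite_mul, zero_mul]
    rw [Finset.sum_ite_eq' univ j]
    simp
  | succ ℓ ih =>
    intro hl i
    show relu (((lnet d L j c ι).A (ℓ+1)).mulVec ((lnet d L j c ι).layer x (ℓ+1)) i) = _
    have hA : ∀ (a : Fin 1) (b : Fin 1), (lnet d L j c ι).A (ℓ+1) a b = 1 := by
      intro a b
      show (if ℓ + 1 = L then c else 1) = 1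
      rw [if_neg (by omega)]
    show relu (∑ k : Fin 1, (lnet d L j c ι).A (ℓ+1) i k *
        (lnet d L j c ι).layer x (ℓ+1) k) = _
    rw [Fin.sum_univ_one]; erw [hA, one_mul, ih (by omega)]
    have : (0:ℝ) ≤ relu ((if ι then (1:ℝ) else -1) * (Fin.snoc x 1 : Fin (d + 1) → ℝ) j) :=
      le_max_right _ _
    exact max_eq_left this

lemma lnet_eval (d L : ℕ) (hL : 1 ≤ L) (j : Fin (d + 1)) (c : ℝ) (ι : Bool) (x : Fin d → ℝ) :
    (lnet d L j c ι).eval x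
      = c * relu ((if ι then (1:ℝ) else -1) * (Fin.snoc x 1 : Fin (d + 1) → ℝ) j) := by
  obtain ⟨L', rfl⟩ : ∃ L', L = L' + 1 := ⟨L - 1, by omega⟩
  show (∑ k : Fin 1, (lnet d (L'+1) j c ι).A (L'+1) (Fin.cast _ 0) k *
      (lnet d (L'+1) j c ι).layer x (L'+1) k) = _
  rw [Fin.sum_univ_one]; erw [lnet_layer d (L'+1) j c ι x L' le_rfl]
  show (if L' + 1 = L' + 1 then c else 1) * _ = _
  rw [if_pos rfl]

lemma matOpNorm_nonneg {m k : ℕ} (A : Matrix (Fin m) (Fin k) ℝ) : 0 ≤ matOpNorm A :=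
  Real.iSup_nonneg fun i => Finset.sum_nonneg fun j _ => abs_nonneg _

lemma rowsum_le_matOpNorm {m k : ℕ} (A : Matrix (Fin m) (Fin k) ℝ) (i : Fin m) :
    ∑ j, |A i j| ≤ matOpNorm A :=
  le_ciSup (f := fun i => ∑ j, |A i j|) (Set.Finite.bddAbove (Set.finite_range _)) i

lemma matOpNorm_rowone {m : ℕ} (A : Matrix (Fin 1) (Fin m) ℝ) :
    matOpNorm A = ∑ k, |A 0 k| := by
  unfold matOpNorm
  exact ciSup_unique

lemma lnet_norm0 (d L : ℕ) (j : Fin (d + 1)) (c : ℝ) (ι : Bool) :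
    matOpNorm ((lnet d L j c ι).A 0) = 1 := by
  show matOpNorm (Matrix.of fun (_ : Fin 1) (k : Fin (d + 1)) =>
      if k = j then (if ι then (1:ℝ) else -1) else 0) = 1
  rw [matOpNorm_rowone]
  have : ∀ k : Fin (d+1),
      |(Matrix.of fun (_ : Fin 1) (k : Fin (d + 1)) =>
        if k = j then (if ι then (1:ℝ) else -1) else 0) 0 k| = if k = j then 1 else 0 := by
    intro k
    simp only [Matrix.of_apply]
    split_ifs <;> cases ι <;> simp
  rw [Finset.sum_congr rfl fun k _ => this k, Finset.sum_ite_eq' univ j]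
  simp

lemma lnet_normsucc (d L : ℕ) (j : Fin (d + 1)) (c : ℝ) (ι : Bool) (ℓ : ℕ) :
    matOpNorm ((lnet d L j c ι).A (ℓ + 1)) = if ℓ + 1 = L then |c| else 1 := by
  show matOpNorm (Matrix.of fun (_ : Fin 1) (_ : Fin 1) =>
      if ℓ + 1 = L then c else 1) = _
  rw [matOpNorm_rowone, Fin.sum_univ_one]
  simp only [Matrix.of_apply]
  split_ifs <;> simp

lemma lnet_prod_norm (d L : ℕ) (hL : 1 ≤ L) (j : Fin (d + 1)) (c : ℝ) (ι : Bool) :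
    ∏ ℓ ∈ Finset.range (L + 1), matOpNorm ((lnet d L j c ι).A ℓ) = |c| := by
  obtain ⟨L', rfl⟩ : ∃ L', L = L' + 1 := ⟨L - 1, by omega⟩
  rw [Finset.prod_range_succ']
  rw [lnet_norm0, mul_one]
  have : ∀ i, i ∈ Finset.range (L' + 1) →
      matOpNorm ((lnet d (L'+1) j c ι).A (i + 1)) = if i = L' then |c| else 1 := by
    intro i _
    rw [lnet_normsucc]
    congr 1
    simp [Nat.succ_inj]
  rw [Finset.prod_congr rfl this, Finset.prod_ite_eq' (Finset.range (L'+1)) L']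
  simp

lemma lnet_mem (d W L : ℕ) (hW : 1 ≤ W) (hL : 1 ≤ L) (j : Fin (d + 1)) (c : ℝ) (K : ℝ)
    (hc : |c| ≤ K) (ι : Bool) : (lnet d L j c ι).eval ∈ SNNSet d W L K := by
  refine ⟨lnet d L j c ι, rfl, ?_, ?_, rfl⟩
  · intro ℓ h1 h2
    match ℓ, h1 with
    | ℓ' + 1, _ => exact hW
  · rw [lnet_prod_norm d L hL j c ι]; exact hc

lemma abs_relu_le (t : ℝ) : |relu t| ≤ |t| := by
  unfold relu
  rcases le_total t 0 with h | h
  · rw [max_eq_right h]; simp [abs_nonneg]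
  · rw [max_eq_left h]

lemma layer_bound {d : ℕ} (φ : SNNP d) (x : Fin d → ℝ) (M : ℝ) (hM : 0 ≤ M)
    (hx : ∀ k : Fin (d + 1), |(Fin.snoc x 1 : Fin (d + 1) → ℝ) k| ≤ M) :
    ∀ ℓ i, |φ.layer x ℓ i| ≤ (∏ k ∈ Finset.range ℓ, matOpNorm (φ.A k)) * M := by
  intro ℓ
  induction ℓ with
  | zero => intro i; simpa [SNNP.layer] using hx _
  | succ ℓ ih =>
    intro i
    have hP : 0 ≤ (∏ k ∈ Finset.range ℓ, matOpNorm (φ.A k)) * M :=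
      mul_nonneg (Finset.prod_nonneg fun k _ => matOpNorm_nonneg _) hM
    have habs : |φ.layer x (ℓ+1) i| ≤ |(φ.A ℓ).mulVec (φ.layer x ℓ) i| := abs_relu_le _
    refine habs.trans ?_
    have h1 : |(φ.A ℓ).mulVec (φ.layer x ℓ) i|
        ≤ ∑ k, |φ.A ℓ i k| * ((∏ k ∈ Finset.range ℓ, matOpNorm (φ.A k)) * M) := by
      show |∑ k, φ.A ℓ i k * φ.layer x ℓ k| ≤ _
      refine (Finset.abs_sum_le_sum_abs _ _).trans ?_
      refine Finset.sum_le_sum fun k _ => ?_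
      rw [abs_mul]
      exact mul_le_mul_of_nonneg_left (ih k) (abs_nonneg _)
    refine h1.trans ?_
    rw [← Finset.sum_mul, Finset.prod_range_succ]
    calc (∑ k, |φ.A ℓ i k|) * ((∏ k ∈ Finset.range ℓ, matOpNorm (φ.A k)) * M)
        ≤ matOpNorm (φ.A ℓ) * ((∏ k ∈ Finset.range ℓ, matOpNorm (φ.A k)) * M) :=
          mul_le_mul_of_nonneg_right (rowsum_le_matOpNorm _ i) hP
      _ = (∏ k ∈ Finset.range ℓ, matOpNorm (φ.A k)) * matOpNorm (φ.A ℓ) * M := by ring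

lemma eval_bound {d : ℕ} (φ : SNNP d) (x : Fin d → ℝ) (M : ℝ) (hM : 0 ≤ M)
    (hx : ∀ k : Fin (d + 1), |(Fin.snoc x 1 : Fin (d + 1) → ℝ) k| ≤ M) :
    |φ.eval x| ≤ (∏ k ∈ Finset.range (φ.depth + 1), matOpNorm (φ.A k)) * M := by
  have hP : 0 ≤ (∏ k ∈ Finset.range φ.depth, matOpNorm (φ.A k)) * M :=
    mul_nonneg (Finset.prod_nonneg fun k _ => matOpNorm_nonneg _) hM
  have h1 : |φ.eval x|
      ≤ ∑ k, |φ.A φ.depth (Fin.cast φ.width_out.symm 0) k| *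
          ((∏ k ∈ Finset.range φ.depth, matOpNorm (φ.A k)) * M) := by
    show |∑ k, φ.A φ.depth (Fin.cast φ.width_out.symm 0) k * φ.layer x φ.depth k| ≤ _
    refine (Finset.abs_sum_le_sum_abs _ _).trans ?_
    refine Finset.sum_le_sum fun k _ => ?_
    rw [abs_mul]
    exact mul_le_mul_of_nonneg_left (layer_bound φ x M hM hx φ.depth k) (abs_nonneg _)
  refine h1.trans ?_
  rw [← Finset.sum_mul, Finset.prod_range_succ]
  calc (∑ k, |φ.A φ.depth (Fin.cast φ.width_out.symm 0) k|) *
        ((∏ k ∈ Finset.range φ.depth, matOpNorm (φ.A k)) * M)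
      ≤ matOpNorm (φ.A φ.depth) * ((∏ k ∈ Finset.range φ.depth, matOpNorm (φ.A k)) * M) :=
        mul_le_mul_of_nonneg_right (rowsum_le_matOpNorm _ _) hP
    _ = (∏ k ∈ Finset.range φ.depth, matOpNorm (φ.A k)) * matOpNorm (φ.A φ.depth) * M := by ring


noncomputable def sg (b : Bool) : ℝ := if b then 1 else -1

lemma sum_pi_succ {n : ℕ} (f : (Fin (n+1) → Bool) → ℝ) :
    ∑ ξ : Fin (n+1) → Bool, f ξ = ∑ b : Bool, ∑ ξ : Fin n → Bool, f (Fin.cons b ξ) := by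
  rw [Fintype.sum_equiv (Fin.consEquiv (fun _ : Fin (n+1) => Bool)).symm f
      (fun p => f (Fin.cons p.1 p.2)) (fun ξ => by simp [Fin.consEquiv])]
  rw [Fintype.sum_prod_type]

lemma sum_pi_const {n : ℕ} (c : ℝ) : ∑ _ξ : Fin n → Bool, c = 2 ^ n * c := by
  simp [Finset.card_univ, mul_comm]

lemma moment2 : ∀ (n : ℕ) (w : Fin n → ℝ),
    ∑ ξ : Fin n → Bool, (∑ i, sg (ξ i) * w i) ^ 2 = 2 ^ n * ∑ i, w i ^ 2 := by
  intro n
  induction n with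
  | zero => intro w; simp
  | succ n ih =>
    intro w
    have hsplit : ∀ (b : Bool) (ξ : Fin n → Bool),
        (∑ i, sg ((Fin.cons b ξ : Fin (n+1) → Bool) i) * w i)
          = sg b * w 0 + ∑ i : Fin n, sg (ξ i) * w i.succ := by
      intro b ξ; rw [Fin.sum_univ_succ]; simp
    rw [sum_pi_succ, Fintype.sum_bool]
    simp only [hsplit]
    rw [← Finset.sum_add_distrib]
    have : ∀ ξ : Fin n → Bool,
        (sg true * w 0 + ∑ i : Fin n, sg (ξ i) * w i.succ) ^ 2
        + (sg false * w 0 + ∑ i : Fin n, sg (ξ i) * w i.succ) ^ 2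
        = 2 * w 0 ^ 2 + 2 * (∑ i : Fin n, sg (ξ i) * w i.succ) ^ 2 := by
      intro ξ; simp only [sg]; norm_num; ring
    rw [Finset.sum_congr rfl (fun ξ _ => this ξ), Finset.sum_add_distrib,
      sum_pi_const, ← Finset.mul_sum, ih (fun i => w i.succ),
      Fin.sum_univ_succ (fun i => w i ^ 2)]
    ring

lemma moment4 : ∀ (n : ℕ) (w : Fin n → ℝ),
    ∑ ξ : Fin n → Bool, (∑ i, sg (ξ i) * w i) ^ 4 ≤ 3 * 2 ^ n * (∑ i, w i ^ 2) ^ 2 := by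
  intro n
  induction n with
  | zero => intro w; simp
  | succ n ih =>
    intro w
    have hsplit : ∀ (b : Bool) (ξ : Fin n → Bool),
        (∑ i, sg ((Fin.cons b ξ : Fin (n+1) → Bool) i) * w i)
          = sg b * w 0 + ∑ i : Fin n, sg (ξ i) * w i.succ := by
      intro b ξ; rw [Fin.sum_univ_succ]; simp
    rw [sum_pi_succ, Fintype.sum_bool]
    simp only [hsplit]
    rw [← Finset.sum_add_distrib]
    have step : ∀ ξ : Fin n → Bool,
        (sg true * w 0 + ∑ i : Fin n, sg (ξ i) * w i.succ) ^ 4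
        + (sg false * w 0 + ∑ i : Fin n, sg (ξ i) * w i.succ) ^ 4
        = 2 * (∑ i : Fin n, sg (ξ i) * w i.succ) ^ 4
          + 12 * w 0 ^ 2 * (∑ i : Fin n, sg (ξ i) * w i.succ) ^ 2 + 2 * w 0 ^ 4 := by
      intro ξ; simp only [sg]; norm_num; ring
    rw [Finset.sum_congr rfl (fun ξ _ => step ξ), Finset.sum_add_distrib,
      Finset.sum_add_distrib, sum_pi_const, ← Finset.mul_sum, ← Finset.mul_sum,
      moment2 n (fun i => w i.succ),
      Fin.sum_univ_succ (fun i => w i ^ 2)]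
    have h4 := ih (fun i => w i.succ)
    set q : ℝ := 2 ^ n with hqdef
    set s : ℝ := ∑ i : Fin n, w i.succ ^ 2 with hsdef
    set S4 : ℝ := ∑ ξ : Fin n → Bool, (∑ i : Fin n, sg (ξ i) * w i.succ) ^ 4 with hS4
    have hq : (0:ℝ) < q := by positivity
    have hw0 : (0:ℝ) ≤ w 0 ^ 4 := by positivity
    have h2 : (2:ℝ) ^ (n+1) = 2 * q := by rw [hqdef, pow_succ]; ring
    rw [h2]
    nlinarith [mul_nonneg hq.le hw0, h4]

lemma khintchine_third (n : ℕ) (w : Fin n → ℝ) :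
    2 ^ n * Real.sqrt (∑ i, w i ^ 2) ≤
      Real.sqrt 3 * ∑ ξ : Fin n → Bool, |∑ i, sg (ξ i) * w i| := by
  set s := ∑ i, w i ^ 2 with hs
  have hs0 : 0 ≤ s := Finset.sum_nonneg fun i _ => sq_nonneg _
  set X : (Fin n → Bool) → ℝ := fun ξ => ∑ i, sg (ξ i) * w i with hX
  set m1 := ∑ ξ : Fin n → Bool, |X ξ| with hm1def
  set m3 := ∑ ξ : Fin n → Bool, |X ξ| ^ 3 with hm3def
  have hm1 : 0 ≤ m1 := Finset.sum_nonneg fun _ _ => abs_nonneg _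
  have hm3 : 0 ≤ m3 := Finset.sum_nonneg fun _ _ => pow_nonneg (abs_nonneg _) 3
  rcases eq_or_lt_of_le hs0 with h0 | hpos
  · rw [← h0, Real.sqrt_zero, mul_zero]
    positivity
  set Q : ℝ := 2 ^ n with hQ
  have hQ0 : (0:ℝ) < Q := by positivity
  have m2 : ∑ ξ : Fin n → Bool, X ξ ^ 2 = Q * s := moment2 n w
  have m4 : ∑ ξ : Fin n → Bool, X ξ ^ 4 ≤ 3 * Q * s ^ 2 := moment4 n w
  have cs1 : (Q * s) ^ 2 ≤ m1 * m3 := by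
    have key := Finset.sum_mul_sq_le_sq_mul_sq univ
      (fun ξ => Real.sqrt |X ξ|) (fun ξ => |X ξ| * Real.sqrt |X ξ|)
    have e1 : ∀ ξ : Fin n → Bool,
        Real.sqrt |X ξ| * (|X ξ| * Real.sqrt |X ξ|) = X ξ ^ 2 := by
      intro ξ
      rw [mul_comm (|X ξ|), ← mul_assoc, Real.mul_self_sqrt (abs_nonneg _), ← sq_abs]
      ring
    have e2 : ∀ ξ : Fin n → Bool, Real.sqrt |X ξ| ^ 2 = |X ξ| := fun ξ =>
      Real.sq_sqrt (abs_nonneg _)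
    have e3 : ∀ ξ : Fin n → Bool, (|X ξ| * Real.sqrt |X ξ|) ^ 2 = |X ξ| ^ 3 := by
      intro ξ
      rw [mul_pow, Real.sq_sqrt (abs_nonneg _)]
      ring
    simp only [e1, e2, e3] at key
    rw [m2] at key
    exact key
  have cs2 : m3 ^ 2 ≤ (Q * s) * (3 * Q * s ^ 2) := by
    have key := Finset.sum_mul_sq_le_sq_mul_sq univ
      (fun ξ => |X ξ|) (fun ξ => X ξ ^ 2)
    have e1 : ∀ ξ : Fin n → Bool, |X ξ| * X ξ ^ 2 = |X ξ| ^ 3 := by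
      intro ξ; rw [← sq_abs]; ring
    have e2 : ∀ ξ : Fin n → Bool, |X ξ| ^ 2 = X ξ ^ 2 := fun ξ => sq_abs _
    have e3 : ∀ ξ : Fin n → Bool, (X ξ ^ 2) ^ 2 = X ξ ^ 4 := by intro ξ; ring
    simp only [e1, e2, e3] at key
    rw [m2] at key
    refine key.trans ?_
    exact mul_le_mul_of_nonneg_left m4 (by positivity)
  have key : Q ^ 2 * s ≤ 3 * m1 ^ 2 := by
    have hA : (Q * s) ^ 4 ≤ (m1 * m3) ^ 2 := by
      calc (Q * s) ^ 4 = ((Q * s) ^ 2) ^ 2 := by ring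
      _ ≤ (m1 * m3) ^ 2 := by
          apply pow_le_pow_left₀ (by positivity) cs1
    have hB : (m1 * m3) ^ 2 ≤ m1 ^ 2 * ((Q * s) * (3 * Q * s ^ 2)) := by
      calc (m1 * m3) ^ 2 = m1 ^ 2 * m3 ^ 2 := by ring
      _ ≤ m1 ^ 2 * ((Q * s) * (3 * Q * s ^ 2)) :=
          mul_le_mul_of_nonneg_left cs2 (by positivity)
    have hC : (Q ^ 2 * s) * (Q ^ 2 * s ^ 3) ≤ (3 * m1 ^ 2) * (Q ^ 2 * s ^ 3) := by
      nlinarith [hA.trans hB]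
    exact le_of_mul_le_mul_right hC (by positivity)
  have lhs_eq : Q * Real.sqrt s = Real.sqrt (Q ^ 2 * s) := by
    rw [Real.sqrt_mul (by positivity), Real.sqrt_sq hQ0.le]
  have rhs_eq : Real.sqrt 3 * m1 = Real.sqrt (3 * m1 ^ 2) := by
    rw [Real.sqrt_mul (by norm_num), Real.sqrt_sq hm1]
  rw [lhs_eq, rhs_eq]
  exact Real.sqrt_le_sqrt key

/-- Rademacher complexity lower bound for `SNN_{d,1}(W,L,K)`.
For points `x₁, …, xₙ ∈ [-B,B]^d` and `S = {(φ(x₁),…,φ(xₙ)) : φ ∈ SNN_{d,1}(W,L,K)}`,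
`R_n(S) ≥ (K/(2√2·n)) max_j √(∑ᵢ x̃_{i,j}²) ≥ K/(2√(2n))`, where `x̃ᵢ = (xᵢ, 1)`. -/
theorem statement3 {d n : ℕ} (hn : 1 ≤ n) (W L : ℕ) (hW : 2 ≤ W) (hL : 1 ≤ L)
    (K : ℝ) (hK : 0 ≤ K) (B : ℝ) (hB : 0 < B)
    (x : Fin n → Fin d → ℝ) (hx : ∀ i j, x i j ∈ Set.Icc (-B) B) :
    K / (2 * Real.sqrt (2 * n)) ≤
        K / (2 * Real.sqrt 2 * n) *
          (⨆ j : Fin (d + 1), Real.sqrt (∑ i, ((Fin.snoc (x i) 1 : Fin (d + 1) → ℝ) j) ^ 2)) ∧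
      K / (2 * Real.sqrt 2 * n) *
          (⨆ j : Fin (d + 1), Real.sqrt (∑ i, ((Fin.snoc (x i) 1 : Fin (d + 1) → ℝ) j) ^ 2)) ≤
        radComplexity ((fun φ => fun i => φ (x i)) '' SNNSet d W L K) := by
  have hn0 : (0:ℝ) < n := by exact_mod_cast hn
  set xt : Fin n → Fin (d + 1) → ℝ := fun i => (Fin.snoc (x i) 1 : Fin (d + 1) → ℝ) with hxt
  set g : Fin (d + 1) → ℝ := fun j => Real.sqrt (∑ i, xt i j ^ 2) with hg
  set c : ℝ := K / (2 * Real.sqrt 2 * n) with hc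
  set S' : Set (Fin n → ℝ) := (fun φ => fun i => φ (x i)) '' SNNSet d W L K with hS'
  set R : ℝ := radComplexity S' with hR
  have hs2 : (0:ℝ) < Real.sqrt 2 := Real.sqrt_pos.2 (by norm_num)
  have hs3 : (0:ℝ) < Real.sqrt 3 := Real.sqrt_pos.2 (by norm_num)
  have hc0 : 0 ≤ c := by positivity
  have hMB : (0:ℝ) ≤ max B 1 := le_trans zero_le_one (le_max_right _ _)
  have hxtB : ∀ (i : Fin n) (k : Fin (d + 1)), |xt i k| ≤ max B 1 := by
    intro i k
    refine Fin.lastCases ?_ ?_ k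
    · simp [hxt, Fin.snoc_last]
    · intro k'
      simp only [hxt, Fin.snoc_castSucc]
      refine le_trans (abs_le.2 ⟨(hx i k').1, (hx i k').2⟩) (le_max_left _ _)
  -- bounded above
  have hbdd : ∀ ξ : Fin n → Bool,
      BddAbove ((fun s => (n : ℝ)⁻¹ * ∑ i, (if ξ i then (1:ℝ) else -1) * s i) '' S') := by
    intro ξ
    refine ⟨K * max B 1, ?_⟩
    rintro y ⟨s, ⟨f, ⟨φ, hdep, hwid, hprod, hf⟩, rfl⟩, rfl⟩
    have hfb : ∀ i : Fin n, |f (x i)| ≤ K * max B 1 := by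
      intro i
      rw [hf]
      refine (eval_bound φ (x i) (max B 1) hMB (hxtB i)).trans ?_
      rw [hdep]
      exact mul_le_mul_of_nonneg_right hprod hMB
    have h1 : ∑ i, (if ξ i then (1:ℝ) else -1) * (fun i => f (x i)) i
        ≤ ∑ i : Fin n, K * max B 1 := by
      refine Finset.sum_le_sum fun i _ => ?_
      have : (if ξ i then (1:ℝ) else -1) * f (x i) ≤ |f (x i)| := by
        cases hb : ξ i
        · simp only [Bool.false_eq_true, if_false, neg_one_mul]
          exact neg_le_abs _
        · simp only [if_true, one_mul]
          exact le_abs_self _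
      exact this.trans (hfb i)
    calc (n : ℝ)⁻¹ * ∑ i, (if ξ i then (1:ℝ) else -1) * (fun i => f (x i)) i
        ≤ (n : ℝ)⁻¹ * (n * (K * max B 1)) := by
          refine mul_le_mul_of_nonneg_left ?_ (by positivity)
          simpa using h1
      _ = K * max B 1 := by field_simp
  -- the key per-coordinate bound
  have key : ∀ j : Fin (d + 1), c * g j ≤ R := by
    intro j
    -- choose the heavier half
    obtain ⟨ι, hι⟩ : ∃ ι : Bool,
        ∑ i, xt i j ^ 2 ≤ 2 * ∑ i, relu ((if ι then (1:ℝ) else -1) * xt i j) ^ 2 := by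
      have hdec : ∀ i : Fin n,
          xt i j ^ 2 = relu ((1:ℝ) * xt i j) ^ 2 + relu ((-1) * xt i j) ^ 2 := by
        intro i
        unfold relu
        rcases le_total (xt i j) 0 with h | h
        · rw [one_mul, max_eq_right h, neg_one_mul, max_eq_left (by linarith)]
          ring
        · rw [one_mul, max_eq_left h, neg_one_mul, max_eq_right (by linarith)]
          ring
      have hsum : ∑ i, xt i j ^ 2
          = ∑ i, relu ((1:ℝ) * xt i j) ^ 2 + ∑ i, relu ((-1) * xt i j) ^ 2 := by
        rw [← Finset.sum_add_distrib]
        exact Finset.sum_congr rfl fun i _ => hdec i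
      have hp : 0 ≤ ∑ i, relu ((1:ℝ) * xt i j) ^ 2 :=
        Finset.sum_nonneg fun i _ => sq_nonneg _
      have hm : 0 ≤ ∑ i, relu ((-1) * xt i j) ^ 2 :=
        Finset.sum_nonneg fun i _ => sq_nonneg _
      rcases le_total (∑ i, relu ((-1) * xt i j) ^ 2) (∑ i, relu ((1:ℝ) * xt i j) ^ 2)
        with h | h
      · exact ⟨true, by simp only [if_true]; linarith⟩
      · exact ⟨false, by simp only [Bool.false_eq_true, if_false]; linarith⟩
    set w : Fin n → ℝ := fun i => relu ((if ι then (1:ℝ) else -1) * xt i j) with hw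
    have hwnn : ∀ i, 0 ≤ w i := fun i => le_max_right _ _
    -- the two networks
    have hmemp : (fun i => (lnet d L j K ι).eval (x i)) ∈ S' :=
      ⟨(lnet d L j K ι).eval, lnet_mem d W L (by omega) hL j K K (by rw [abs_of_nonneg hK]) ι,
        rfl⟩
    have hmemm : (fun i => (lnet d L j (-K) ι).eval (x i)) ∈ S' :=
      ⟨(lnet d L j (-K) ι).eval,
        lnet_mem d W L (by omega) hL j (-K) K (by rw [abs_neg, abs_of_nonneg hK]) ι, rfl⟩
    -- per-sign bound on the sup
    have hsup : ∀ ξ : Fin n → Bool,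
        K * (n : ℝ)⁻¹ * |∑ i, sg (ξ i) * w i|
          ≤ sSup ((fun s => (n : ℝ)⁻¹ * ∑ i, (if ξ i then (1:ℝ) else -1) * s i) '' S') := by
      intro ξ
      have hvp : (n : ℝ)⁻¹ * ∑ i, (if ξ i then (1:ℝ) else -1) * (K * w i)
          ≤ sSup ((fun s => (n : ℝ)⁻¹ * ∑ i, (if ξ i then (1:ℝ) else -1) * s i) '' S') := by
        refine le_csSup (hbdd ξ) ?_
        exact ⟨(fun i => (lnet d L j K ι).eval (x i)), hmemp, by
          congr 1
          funext i
          rw [lnet_eval d L hL j K ι, hw]⟩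
      have hvm : (n : ℝ)⁻¹ * ∑ i, (if ξ i then (1:ℝ) else -1) * (-K * w i)
          ≤ sSup ((fun s => (n : ℝ)⁻¹ * ∑ i, (if ξ i then (1:ℝ) else -1) * s i) '' S') := by
        refine le_csSup (hbdd ξ) ?_
        exact ⟨(fun i => (lnet d L j (-K) ι).eval (x i)), hmemm, by
          congr 1
          funext i
          rw [lnet_eval d L hL j (-K) ι, hw]⟩
      have hep : (n : ℝ)⁻¹ * ∑ i, (if ξ i then (1:ℝ) else -1) * (K * w i)
          = K * (n : ℝ)⁻¹ * ∑ i, sg (ξ i) * w i := by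
        rw [Finset.mul_sum, Finset.mul_sum]
        refine Finset.sum_congr rfl fun i _ => ?_
        unfold sg
        ring
      have hem : (n : ℝ)⁻¹ * ∑ i, (if ξ i then (1:ℝ) else -1) * (-K * w i)
          = -(K * (n : ℝ)⁻¹ * ∑ i, sg (ξ i) * w i) := by
        rw [← hep]
        rw [Finset.mul_sum, Finset.mul_sum, ← Finset.sum_neg_distrib]
        refine Finset.sum_congr rfl fun i _ => ?_
        ring
      rw [hep] at hvp
      rw [hem] at hvm
      rcases le_total 0 (∑ i, sg (ξ i) * w i) with h | h
      · rw [abs_of_nonneg h] at *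
        exact hvp
      · rw [abs_of_nonpos h]
        calc K * (n : ℝ)⁻¹ * -(∑ i, sg (ξ i) * w i)
            = -(K * (n : ℝ)⁻¹ * ∑ i, sg (ξ i) * w i) := by ring
          _ ≤ _ := hvm
    -- sum over sign patterns
    have hkh := khintchine_third n w
    have hsum2 : K * (n : ℝ)⁻¹ * (2 ^ n * Real.sqrt (∑ i, w i ^ 2) / Real.sqrt 3)
        ≤ ∑ ξ : Fin n → Bool,
            sSup ((fun s => (n : ℝ)⁻¹ * ∑ i, (if ξ i then (1:ℝ) else -1) * s i) '' S') := by
      calc K * (n : ℝ)⁻¹ * (2 ^ n * Real.sqrt (∑ i, w i ^ 2) / Real.sqrt 3)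
          ≤ K * (n : ℝ)⁻¹ * ∑ ξ : Fin n → Bool, |∑ i, sg (ξ i) * w i| := by
            refine mul_le_mul_of_nonneg_left ?_ (by positivity)
            rw [div_le_iff₀ hs3]
            linarith [hkh]
        _ = ∑ ξ : Fin n → Bool, K * (n : ℝ)⁻¹ * |∑ i, sg (ξ i) * w i| := by
            rw [Finset.mul_sum]
        _ ≤ _ := Finset.sum_le_sum fun ξ _ => hsup ξ
    -- conclude
    have hRge : K * (n : ℝ)⁻¹ * Real.sqrt (∑ i, w i ^ 2) / Real.sqrt 3 ≤ R := by
      rw [hR]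
      unfold radComplexity
      rw [le_div_iff₀ (by positivity : (0:ℝ) < (2:ℝ) ^ n)]
      calc K * (n : ℝ)⁻¹ * Real.sqrt (∑ i, w i ^ 2) / Real.sqrt 3 * 2 ^ n
          = K * (n : ℝ)⁻¹ * (2 ^ n * Real.sqrt (∑ i, w i ^ 2) / Real.sqrt 3) := by ring
        _ ≤ _ := hsum2
    -- now compare c * g j with the bound
    refine le_trans ?_ hRge
    have hst : Real.sqrt (∑ i, xt i j ^ 2)
        ≤ Real.sqrt 2 * Real.sqrt (∑ i, w i ^ 2) := by
      rw [← Real.sqrt_mul (by norm_num : (0:ℝ) ≤ 2)]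
      exact Real.sqrt_le_sqrt hι
    have hsw : 0 ≤ Real.sqrt (∑ i, w i ^ 2) := Real.sqrt_nonneg _
    have hs3le : Real.sqrt 3 ≤ 2 := by
      nlinarith [Real.sq_sqrt (by norm_num : (0:ℝ) ≤ 3), hs3]
    calc c * g j ≤ c * (Real.sqrt 2 * Real.sqrt (∑ i, w i ^ 2)) :=
          mul_le_mul_of_nonneg_left hst hc0
      _ = K * Real.sqrt (∑ i, w i ^ 2) / (2 * n) := by
          rw [hc, div_mul_eq_mul_div, div_eq_div_iff (by positivity) (by positivity)]
          ring
      _ ≤ K * Real.sqrt (∑ i, w i ^ 2) / (Real.sqrt 3 * n) := by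
          rw [div_le_div_iff₀ (by positivity) (by positivity)]
          nlinarith [mul_nonneg (mul_nonneg hK hsw) hn0.le]
      _ = K * (n : ℝ)⁻¹ * Real.sqrt (∑ i, w i ^ 2) / Real.sqrt 3 := by
          rw [div_eq_div_iff (by positivity) (by positivity)]
          field_simp
  constructor
  · -- first inequality
    have hglast : g (Fin.last d) = Real.sqrt n := by
      rw [hg]
      simp [hxt, Fin.snoc_last]
    have hle : Real.sqrt n ≤ ⨆ j, g j := by
      rw [← hglast]
      exact le_ciSup (Set.Finite.bddAbove (Set.finite_range g)) (Fin.last d)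
    have hsn : (0:ℝ) < Real.sqrt n := Real.sqrt_pos.2 hn0
    have hnn : Real.sqrt n * Real.sqrt n = n := Real.mul_self_sqrt hn0.le
    have heq : K / (2 * Real.sqrt (2 * n)) = c * Real.sqrt n := by
      rw [hc, Real.sqrt_mul (by norm_num : (0:ℝ) ≤ 2), div_mul_eq_mul_div,
        div_eq_div_iff (by positivity) (by positivity)]
      linear_combination (-2) * Real.sqrt 2 * K * hnn
    rw [heq]
    exact mul_le_mul_of_nonneg_left hle hc0
  · -- second inequality
    rcases eq_or_lt_of_le hc0 with hc0' | hcpos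
    · rw [← hc0', zero_mul]
      have := key (Fin.last d)
      rw [← hc0', zero_mul] at this
      exact this
    · have hsuple : (⨆ j, g j) ≤ R / c := by
        refine ciSup_le fun j => ?_
        rw [le_div_iff₀ hcpos]
        rw [mul_comm]
        exact key j
      calc c * (⨆ j, g j) ≤ c * (R / c) := mul_le_mul_of_nonneg_left hsuple hc0
        _ = R := by field_simp
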